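/- arXiv:0712.2091 — 2 statements merged into one kernel-verified Lean document; each statement's English description precedes it below -/
import Mathlib

section
/- Let λ ∈ (0,1) and d ≥ 2. The sequence v(k) = λ^((d^k-1)/(d-1)) is the unique fixed point, among sequences w with w(0) = 1, 1 ≥ w(1) ≥ w(2) ≥ ⋯ ≥ 0 and w summable, of the stationarity equations λ(w(k-1)^d − w(k)^d) = w(k) − w(k+1) for all k ≥ 1, together with w(1) = λ. -/
open Finset

/-- Among nonincreasing summable sequences `w` with `w 0 = 1`, values in `[0,1]`,
and `w 1 = λ`, the sequence `v k = λ^((d^k-1)/(d-1))` is the unique solution of the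
stationarity equations `λ (w(k-1)^d − w(k)^d) = w(k) − w(k+1)` for `k ≥ 1`. -/
theorem stmt_1 (lam : ℝ) (hlam0 : 0 < lam) (hlam1 : lam < 1) (d : ℕ) (hd : 2 ≤ d)
    (w : ℕ → ℝ) (hw0 : w 0 = 1) (hmono : Antitone w) (hnonneg : ∀ k, 0 ≤ w k)
    (hsum : Summable w) (hw1 : w 1 = lam)
    (hfix : ∀ k : ℕ, 1 ≤ k → lam * (w (k - 1) ^ d - w k ^ d) = w k - w (k + 1)) :
    ∀ k, w k = lam ^ (∑ i ∈ Finset.range k, (d : ℝ) ^ i) := by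
  have hrec : ∀ k, w (k + 1) = lam * w k ^ d := by
    intro k
    induction k with
    | zero => simp [hw0, hw1]
    | succ n ih =>
      have h := hfix (n + 1) (by omega)
      simp only [Nat.add_sub_cancel] at h
      nlinarith [h, ih]
  intro k
  induction k with
  | zero => simp [hw0]
  | succ n ih =>
    have hS : ∑ i ∈ Finset.range (n + 1), (d : ℝ) ^ i
        = 1 + (∑ i ∈ Finset.range n, (d : ℝ) ^ i) * d := by
      rw [geom_sum_succ]; ring
    rw [hrec n, ih, hS, ← Real.rpow_natCast (lam ^ _) d,
      ← Real.rpow_mul hlam0.le, Real.rpow_add hlam0, Real.rpow_one]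
end

section
/- Let Z₁, …, Zₙ be independent real random variables, each with variance at most σⱼ² and range (essential supremum minus essential infimum) at most b, and let f : ℝⁿ → ℝ be 1-Lipschitz with respect to the ℓ¹ norm. Set v = Σⱼ σⱼ². Then for every u > 0, P(|f(Z₁,…,Zₙ) − E f(Z₁,…,Zₙ)| ≥ u) ≤ 2 exp(−u²/(2v + (2/3) b u)). -/
open MeasureTheory ProbabilityTheory Real
open scoped Nat

lemma bst_fact_ge (k : ℕ) : 2 * 3 ^ k ≤ (k + 2)! := by
  induction k with
  | zero => simp [Nat.factorial]
  | succ k ih =>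
      have : (k + 3)! = (k + 3) * (k + 2)! := rfl
      calc 2 * 3 ^ (k + 1) = 3 * (2 * 3 ^ k) := by ring
        _ ≤ 3 * (k + 2)! := by omega
        _ ≤ (k + 3) * (k + 2)! := by
            have := Nat.factorial_pos (k + 2); nlinarith
        _ = (k + 3)! := rfl

lemma bst_exp_quad_bound {c y : ℝ} (hc0 : 0 < c) (hc3 : c < 3) (hyc : y ≤ c) :
    Real.exp y ≤ 1 + y + y ^ 2 / (2 * (1 - c / 3)) := by
  have hd : 0 < 1 - c / 3 := by linarith
  rcases le_or_gt y 0 with hy | hy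
  · -- exp y ≤ 1 + y + y²/2, valid for all y, via exp(-y) ≥ 1 - y + y²/2
    have h := Real.quadratic_le_exp_of_nonneg (neg_nonneg.2 hy)
    have hpos : (0:ℝ) < 1 + -y + (-y) ^ 2 / 2 := by nlinarith
    have h2 : Real.exp y ≤ 1 + y + y ^ 2 / 2 := by
      have hmul : Real.exp y * Real.exp (-y) = 1 := by
        rw [← Real.exp_add]; simp
      have hep : 0 < Real.exp y := Real.exp_pos y
      nlinarith [sq_nonneg y, sq_nonneg (y^2)]
    have h3 : y ^ 2 / 2 ≤ y ^ 2 / (2 * (1 - c / 3)) := by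
      apply div_le_div_of_nonneg_left (sq_nonneg y) (by linarith)
      nlinarith
    linarith
  · -- 0 < y ≤ c : series bound
    have hsum : Summable (fun n : ℕ => y ^ n / n !) := Real.summable_pow_div_factorial y
    have hexp : Real.exp y = ∑' n : ℕ, y ^ n / n ! := by
      rw [Real.exp_eq_exp_ℝ, NormedSpace.exp_eq_tsum_div]
    have hsum1 : Summable (fun n : ℕ => y ^ (n + 1) / (n + 1)!) :=
      (summable_nat_add_iff (f := fun n : ℕ => y ^ n / n !) 1).mpr hsum
    have hsum2 : Summable (fun n : ℕ => y ^ (n + 2) / (n + 2)!) :=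
      (summable_nat_add_iff (f := fun n : ℕ => y ^ n / n !) 2).mpr hsum
    have hsplit : Real.exp y = 1 + y + ∑' k : ℕ, y ^ (k + 2) / (k + 2)! := by
      rw [hexp, Summable.tsum_eq_zero_add hsum, Summable.tsum_eq_zero_add hsum1]
      norm_num [Nat.factorial]
      ring
    have hgeo : Summable (fun k : ℕ => y ^ 2 / 2 * (c / 3) ^ k) :=
      (summable_geometric_of_lt_one (by positivity) (by linarith)).mul_left _
    have hterm : ∀ k : ℕ, y ^ (k + 2) / (k + 2)! ≤ y ^ 2 / 2 * (c / 3) ^ k := by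
      intro k
      have h1 : y ^ (k + 2) ≤ y ^ 2 * c ^ k := by
        rw [pow_add, mul_comm]
        gcongr
      have h2 : (2 * 3 ^ k : ℝ) ≤ ((k + 2)! : ℝ) := by
        exact_mod_cast bst_fact_ge k
      have h3 : (0:ℝ) < 2 * 3 ^ k := by positivity
      calc y ^ (k + 2) / (k + 2)! ≤ y ^ 2 * c ^ k / (2 * 3 ^ k) := by
            apply div_le_div₀ (by positivity) h1 h3 h2
        _ = y ^ 2 / 2 * (c / 3) ^ k := by
            rw [div_pow]; ring
    have htail : ∑' k : ℕ, y ^ (k + 2) / (k + 2)! ≤ y ^ 2 / (2 * (1 - c / 3)) := by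
      calc ∑' k : ℕ, y ^ (k + 2) / (k + 2)! ≤ ∑' k : ℕ, y ^ 2 / 2 * (c / 3) ^ k :=
            Summable.tsum_le_tsum hterm hsum2 hgeo
        _ = y ^ 2 / 2 * (1 - c / 3)⁻¹ := by
            rw [tsum_mul_left, tsum_geometric_of_lt_one (by positivity) (by linarith)]
        _ = y ^ 2 / (2 * (1 - c / 3)) := by
            field_simp
    linarith [hsplit, htail]

lemma bst_int_of_bdd {α : Type*} [MeasurableSpace α] {ν : Measure α} [IsFiniteMeasure ν]
    {g : α → ℝ} (hg : AEStronglyMeasurable g ν) {C : ℝ} (hb : ∀ᵐ x ∂ν, |g x| ≤ C) :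
    Integrable g ν :=
  Integrable.mono' (integrable_const C) hg (by simpa [Real.norm_eq_abs] using hb)

lemma bst_expand_int {α : Type*} [MeasurableSpace α] (ν : Measure α) [IsProbabilityMeasure ν]
    (u : α → ℝ) (hu : Integrable u ν) (hu2 : Integrable (fun x => u x ^ 2) ν) (c d : ℝ) :
    ∫ x, (u x ^ 2 - c * u x + d) ∂ν = (∫ x, u x ^ 2 ∂ν) - c * (∫ t, u t ∂ν) + d := by
  have e1 : ∫ x, ((u x ^ 2 - c * u x) + d) ∂ν
      = (∫ x, (u x ^ 2 - c * u x) ∂ν) + ∫ _x, d ∂ν :=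
    integral_add (hu2.sub (hu.const_mul c)) (integrable_const d)
  have e2 : ∫ x, (u x ^ 2 - c * u x) ∂ν
      = (∫ x, u x ^ 2 ∂ν) - ∫ x, c * u x ∂ν := integral_sub hu2 (hu.const_mul c)
  rw [e1, e2, integral_const_mul, integral_const]
  simp

lemma bst_abs_le_box {a b x : ℝ} (hx : x ∈ Set.Icc a (a + b)) : |x| ≤ |a| + |b| := by
  rcases hx with ⟨h1, h2⟩
  rw [abs_le]
  constructor
  · have := neg_abs_le a; linarith [abs_nonneg b]
  · have := le_abs_self a; have := le_abs_self b; linarith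

/-- A 1-Lipschitz function is a.e. bounded under a boxed measure. -/
lemma bst_lip_bdd (ν : Measure ℝ) [IsProbabilityMeasure ν] {a b : ℝ} (hb : 0 ≤ b)
    (hbox : ∀ᵐ x ∂ν, x ∈ Set.Icc a (a + b))
    (h : ℝ → ℝ) (hLip : ∀ x y, |h x - h y| ≤ |x - y|) :
    ∀ᵐ x ∂ν, |h x| ≤ |h a| + b := by
  filter_upwards [hbox] with x hx
  have h1 : |h x - h a| ≤ |x - a| := hLip x a
  have h2 : |x - a| ≤ b := abs_le.mpr ⟨by linarith [hx.1], by linarith [hx.2]⟩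
  calc |h x| = |h a + (h x - h a)| := by ring_nf
    _ ≤ |h a| + |h x - h a| := abs_add_le _ _
    _ ≤ |h a| + b := by linarith

lemma bst_sub_mean_le (ν : Measure ℝ) [IsProbabilityMeasure ν] {a b : ℝ} (hb : 0 ≤ b)
    (hbox : ∀ᵐ x ∂ν, x ∈ Set.Icc a (a + b))
    (h : ℝ → ℝ) (hmeas : Measurable h) (hLip : ∀ x y, |h x - h y| ≤ |x - y|) :
    ∀ᵐ x ∂ν, h x - ∫ t, h t ∂ν ≤ b := by
  have hh : Integrable h ν :=
    bst_int_of_bdd hmeas.aestronglyMeasurable (bst_lip_bdd ν hb hbox h hLip)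
  filter_upwards [hbox] with x hx
  have e : h x - ∫ t, h t ∂ν = ∫ t, (h x - h t) ∂ν := by
    rw [integral_sub (integrable_const _) hh, integral_const]; simp
  rw [e]
  have hbd : ∀ᵐ t ∂ν, h x - h t ≤ b := by
    filter_upwards [hbox] with t ht
    have h1 : |h x - h t| ≤ |x - t| := hLip x t
    have h2 : |x - t| ≤ b := abs_le.mpr ⟨by linarith [hx.1, ht.2], by linarith [hx.2, ht.1]⟩
    calc h x - h t ≤ |h x - h t| := le_abs_self _
      _ ≤ b := h1.trans h2
  calc ∫ t, (h x - h t) ∂ν ≤ ∫ _t, b ∂ν :=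
        integral_mono_ae ((integrable_const (h x)).sub hh) (integrable_const b) hbd
    _ = b := by rw [integral_const]; simp

lemma bst_var_lipschitz (ν : Measure ℝ) [IsProbabilityMeasure ν] {a b : ℝ} (hb : 0 ≤ b)
    (hbox : ∀ᵐ x ∂ν, x ∈ Set.Icc a (a + b))
    (h : ℝ → ℝ) (hmeas : Measurable h) (hLip : ∀ x y, |h x - h y| ≤ |x - y|) :
    ∫ x, (h x - ∫ t, h t ∂ν) ^ 2 ∂ν ≤ ∫ x, (x - ∫ t, t ∂ν) ^ 2 ∂ν := by
  have hhbdd := bst_lip_bdd ν hb hbox h hLip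
  set Ch := |h a| + b with hCh
  set Cx := |a| + |b| with hCx
  have hxbdd : ∀ᵐ x ∂ν, |x| ≤ Cx := by
    filter_upwards [hbox] with x hx; exact bst_abs_le_box hx
  have hh : Integrable h ν := bst_int_of_bdd hmeas.aestronglyMeasurable hhbdd
  have hh2 : Integrable (fun x => h x ^ 2) ν := by
    refine bst_int_of_bdd ((hmeas.pow_const 2).aestronglyMeasurable) (C := Ch ^ 2) ?_
    filter_upwards [hhbdd] with x hx
    rw [abs_pow]
    exact pow_le_pow_left₀ (abs_nonneg _) hx 2
  have hid : Integrable (fun x : ℝ => x) ν :=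
    bst_int_of_bdd measurable_id.aestronglyMeasurable hxbdd
  have hid2 : Integrable (fun x : ℝ => x ^ 2) ν := by
    refine bst_int_of_bdd ((measurable_id.pow_const 2).aestronglyMeasurable) (C := Cx ^ 2) ?_
    filter_upwards [hxbdd] with x hx
    rw [abs_pow]
    exact pow_le_pow_left₀ (abs_nonneg _) hx 2
  set gh := ∫ t, h t ∂ν with hgh
  set mid := ∫ t, (t : ℝ) ∂ν with hmid
  set Sh := ∫ x, h x ^ 2 ∂ν with hSh
  set Sid := ∫ x, x ^ 2 ∂ν with hSid
  -- inner identities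
  have hA : ∀ c : ℝ, ∫ y, (c - h y) ^ 2 ∂ν = c ^ 2 - 2 * c * gh + Sh := by
    intro c
    have e : ∀ y, (c - h y) ^ 2 = h y ^ 2 - (2 * c) * h y + c ^ 2 := fun y => by ring
    simp_rw [e]
    rw [bst_expand_int ν h hh hh2 (2 * c) (c ^ 2)]
    ring
  have hB : ∀ c : ℝ, ∫ y, (c - y) ^ 2 ∂ν = c ^ 2 - 2 * c * mid + Sid := by
    intro c
    have e : ∀ y : ℝ, (c - y) ^ 2 = y ^ 2 - (2 * c) * y + c ^ 2 := fun y => by ring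
    simp_rw [e]
    rw [bst_expand_int ν _ hid hid2 (2 * c) (c ^ 2)]
    ring
  -- pointwise comparison of inner integrals
  have hAB : ∀ x : ℝ, (h x) ^ 2 - 2 * (h x) * gh + Sh ≤ x ^ 2 - 2 * x * mid + Sid := by
    intro x
    rw [← hA (h x), ← hB x]
    refine integral_mono_ae ?_ ?_ ?_
    · refine bst_int_of_bdd (((measurable_const.sub hmeas).pow_const 2).aestronglyMeasurable)
        (C := (|h x| + Ch) ^ 2) ?_
      filter_upwards [hhbdd] with y hy
      rw [abs_pow]
      refine pow_le_pow_left₀ (abs_nonneg _) ?_ 2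
      calc |h x - h y| ≤ |h x| + |h y| := abs_sub _ _
        _ ≤ |h x| + Ch := by linarith
    · refine bst_int_of_bdd (((measurable_const.sub measurable_id).pow_const 2).aestronglyMeasurable)
        (C := (|x| + Cx) ^ 2) ?_
      filter_upwards [hxbdd] with y hy
      rw [abs_pow]
      refine pow_le_pow_left₀ (abs_nonneg _) ?_ 2
      calc |x - y| ≤ |x| + |y| := abs_sub _ _
        _ ≤ |x| + Cx := by linarith
    · apply ae_of_all
      intro y
      have h1 : |h x - h y| ≤ |x - y| := hLip x y
      calc (h x - h y) ^ 2 = |h x - h y| ^ 2 := (sq_abs _).symm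
        _ ≤ |x - y| ^ 2 := pow_le_pow_left₀ (abs_nonneg _) h1 2
        _ = (x - y) ^ 2 := sq_abs _
  -- integrate the comparison
  have mono : ∫ x, ((h x) ^ 2 - 2 * gh * (h x) + Sh) ∂ν ≤ ∫ x, (x ^ 2 - 2 * mid * x + Sid) ∂ν := by
    refine integral_mono_ae ?_ ?_ (ae_of_all _ fun x => ?_)
    · exact (hh2.sub (hh.const_mul (2 * gh))).add (integrable_const Sh)
    · exact (hid2.sub (hid.const_mul (2 * mid))).add (integrable_const Sid)
    · dsimp only
      have := hAB x
      linarith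
  rw [bst_expand_int ν h hh hh2 (2 * gh) Sh, bst_expand_int ν _ hid hid2 (2 * mid) Sid] at mono
  -- expand the goal
  have eL : ∫ x, (h x - gh) ^ 2 ∂ν = Sh - 2 * gh * gh + gh ^ 2 := by
    have e : ∀ x, (h x - gh) ^ 2 = h x ^ 2 - (2 * gh) * h x + gh ^ 2 := fun x => by ring
    simp_rw [e]
    rw [bst_expand_int ν h hh hh2 (2 * gh) (gh ^ 2)]
  have eR : ∫ x, (x - mid) ^ 2 ∂ν = Sid - 2 * mid * mid + mid ^ 2 := by
    have e : ∀ x : ℝ, (x - mid) ^ 2 = x ^ 2 - (2 * mid) * x + mid ^ 2 := fun x => by ring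
    simp_rw [e]
    rw [bst_expand_int ν _ hid hid2 (2 * mid) (mid ^ 2)]
  rw [eL, eR]
  nlinarith [mono]

lemma bst_mgf {α : Type*} [MeasurableSpace α] (ν : Measure α) [IsProbabilityMeasure ν]
    (X : α → ℝ) (hXint : Integrable X ν)
    (hX2 : Integrable (fun x => (X x - ∫ t, X t ∂ν) ^ 2) ν)
    (b : ℝ) (hb : 0 < b) (hub : ∀ᵐ x ∂ν, X x - ∫ t, X t ∂ν ≤ b)
    (s : ℝ) (hs : ∫ x, (X x - ∫ t, X t ∂ν) ^ 2 ∂ν ≤ s)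
    (lam : ℝ) (hlam : 0 ≤ lam) (hlb : lam * b < 3) :
    ∫ x, Real.exp (lam * (X x - ∫ t, X t ∂ν)) ∂ν ≤
      Real.exp (lam ^ 2 * s / (2 * (1 - lam * b / 3))) := by
  set m := ∫ t, X t ∂ν with hm
  have hs0 : 0 ≤ s := le_trans (integral_nonneg fun x => sq_nonneg _) hs
  rcases eq_or_lt_of_le hlam with hlam0 | hlam0
  · simp only [← hlam0, zero_mul, Real.exp_zero, mul_zero, zero_div, zero_pow,
      ne_eq, OfNat.ofNat_ne_zero, not_false_eq_true, zero_mul, zero_div]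
    rw [integral_const]
    simp
  · have hc0 : 0 < lam * b := mul_pos hlam0 hb
    have hd : 0 < 1 - lam * b / 3 := by linarith
    set K := lam ^ 2 / (2 * (1 - lam * b / 3)) with hK
    have hK0 : 0 ≤ K := by positivity
    have hYint : Integrable (fun x => X x - m) ν := hXint.sub (integrable_const m)
    have hY0 : ∫ x, (X x - m) ∂ν = 0 := by
      rw [integral_sub hXint (integrable_const m), integral_const]
      simp [hm]
    have hptwise : ∀ᵐ x ∂ν,
        Real.exp (lam * (X x - m)) ≤ 1 + lam * (X x - m) + K * (X x - m) ^ 2 := by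
      filter_upwards [hub] with x hx
      have h1 : lam * (X x - m) ≤ lam * b := mul_le_mul_of_nonneg_left hx hlam
      have h2 := bst_exp_quad_bound hc0 hlb h1
      have h3 : (lam * (X x - m)) ^ 2 / (2 * (1 - lam * b / 3)) = K * (X x - m) ^ 2 := by
        rw [hK]; ring
      linarith
    have hRint : Integrable (fun x => 1 + lam * (X x - m) + K * (X x - m) ^ 2) ν := by
      exact ((integrable_const (1:ℝ)).add (hYint.const_mul lam)).add (hX2.const_mul K)
    have hLint : Integrable (fun x => Real.exp (lam * (X x - m))) ν := by
      refine Integrable.mono' (integrable_const (Real.exp (lam * b)))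
        ?_ ?_
      · exact (Real.measurable_exp.comp_aemeasurable
          ((hYint.aemeasurable).const_mul lam)).aestronglyMeasurable
      · filter_upwards [hub] with x hx
        rw [Real.norm_eq_abs, abs_of_pos (Real.exp_pos _)]
        exact Real.exp_le_exp.mpr (mul_le_mul_of_nonneg_left hx hlam)
    calc ∫ x, Real.exp (lam * (X x - m)) ∂ν
        ≤ ∫ x, (1 + lam * (X x - m) + K * (X x - m) ^ 2) ∂ν :=
          integral_mono_ae hLint hRint hptwise
      _ = 1 + lam * ∫ x, (X x - m) ∂ν + K * ∫ x, (X x - m) ^ 2 ∂ν := by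
          have e1 : ∫ x, (1 + lam * (X x - m) + K * (X x - m) ^ 2) ∂ν
              = (∫ x, (1 + lam * (X x - m)) ∂ν) + ∫ x, K * (X x - m) ^ 2 ∂ν :=
            integral_add ((integrable_const (1:ℝ)).add (hYint.const_mul lam))
              (hX2.const_mul K)
          have e2 : ∫ x, (1 + lam * (X x - m)) ∂ν
              = (∫ _x, (1:ℝ) ∂ν) + ∫ x, lam * (X x - m) ∂ν :=
            integral_add (integrable_const (1:ℝ)) (hYint.const_mul lam)
          rw [e1, e2, integral_const, integral_const_mul, integral_const_mul]
          simp
      _ = 1 + K * ∫ x, (X x - m) ^ 2 ∂ν := by rw [hY0]; ring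
      _ ≤ 1 + K * s := by nlinarith
      _ ≤ Real.exp (K * s) := by linarith [Real.add_one_le_exp (K * s)]
      _ = Real.exp (lam ^ 2 * s / (2 * (1 - lam * b / 3))) := by rw [hK]; ring_nf



lemma bst_ae_mem_of_measure_one {α : Type*} [MeasurableSpace α] {ν : Measure α}
    [IsProbabilityMeasure ν] {S : Set α} (hS : MeasurableSet S) (h1 : ν S = 1) :
    ∀ᵐ x ∂ν, x ∈ S := by
  rw [ae_iff]
  have e : {x | ¬ x ∈ S} = Sᶜ := rfl
  rw [e, prob_compl_eq_zero_iff hS]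
  exact h1

lemma bst_measure_one_of_ae {α : Type*} [MeasurableSpace α] {ν : Measure α}
    [IsProbabilityMeasure ν] {S : Set α} (hS : MeasurableSet S) (h : ∀ᵐ x ∂ν, x ∈ S) :
    ν S = 1 := by
  rw [← prob_compl_eq_zero_iff hS]
  rw [ae_iff] at h
  exact h

lemma bst_tensor (n : ℕ) :
    ∀ (μ : Fin n → Measure ℝ), (∀ i, IsProbabilityMeasure (μ i)) →
    ∀ (a : Fin n → ℝ) (b : ℝ), 0 < b →
    (∀ j, (∀ᵐ x ∂(μ j), x ∈ Set.Icc (a j) (a j + b))) →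
    ∀ (s : Fin n → ℝ), (∀ j, 0 ≤ s j) →
    (∀ j, ∫ x, (x - ∫ t, t ∂(μ j)) ^ 2 ∂(μ j) ≤ s j) →
    ∀ (f : (Fin n → ℝ) → ℝ), Measurable f →
    (∀ x y, |f x - f y| ≤ ∑ j, |x j - y j|) →
    ∀ (lam : ℝ), 0 ≤ lam → lam * b < 3 →
    ∫ x, Real.exp (lam * (f x - ∫ t, f t ∂(Measure.pi μ))) ∂(Measure.pi μ) ≤
      Real.exp (lam ^ 2 * (∑ j, s j) / (2 * (1 - lam * b / 3))) := by
  induction n with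
  | zero =>
      intro μ hprob a b hb hbox s hs0 hvars f hfmeas hLip lam hlam hlb
      haveI : ∀ i, IsProbabilityMeasure (μ i) := hprob
      haveI : IsProbabilityMeasure (Measure.pi μ) := inferInstance
      set z : Fin 0 → ℝ := fun i => i.elim0 with hz
      have hfz : f = fun _ => f z := funext fun x => congrArg f (funext fun i => i.elim0)
      rw [hfz]
      rw [integral_const]
      simp
  | succ n ih =>
      intro μ hprob a b hb hbox s hs0 hvars f hfmeas hLip lam hlam hlb
      haveI : ∀ i, IsProbabilityMeasure (μ i) := hprob
      set ν : Measure ℝ := μ 0 with hν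
      set μ' : Fin n → Measure ℝ := fun j => μ j.succ with hμ'
      haveI : ∀ i, IsProbabilityMeasure (μ' i) := fun i => hprob i.succ
      set P1 : Measure (Fin (n + 1) → ℝ) := Measure.pi μ with hP1
      set P2 : Measure (Fin n → ℝ) := Measure.pi μ' with hP2
      haveI : IsProbabilityMeasure P1 := inferInstance
      haveI : IsProbabilityMeasure P2 := inferInstance
      set Rho : Measure (ℝ × (Fin n → ℝ)) := ν.prod P2 with hRho
      haveI : IsProbabilityMeasure Rho := inferInstance
      set e : (Fin (n + 1) → ℝ) ≃ᵐ ℝ × (Fin n → ℝ) :=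
        MeasurableEquiv.piFinSuccAbove (fun _ : Fin (n + 1) => ℝ) 0 with he
      have hmp : MeasurePreserving (⇑e) P1 Rho := measurePreserving_piFinSuccAbove μ 0
      have hesymm : ∀ p : ℝ × (Fin n → ℝ), e.symm p = Fin.cons p.1 p.2 := by
        intro p
        simp [he, MeasurableEquiv.piFinSuccAbove, Fin.insertNthEquiv, Fin.insertNth_zero']
      have hconsmeas : Measurable (fun p : ℝ × (Fin n → ℝ) => (Fin.cons p.1 p.2 : Fin (n+1) → ℝ)) := by
        have : (fun p : ℝ × (Fin n → ℝ) => (Fin.cons p.1 p.2 : Fin (n+1) → ℝ)) = ⇑e.symm :=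
          funext fun p => (hesymm p).symm
        rw [this]
        exact e.symm.measurable
      have transport : ∀ F : (Fin (n + 1) → ℝ) → ℝ,
          ∫ p, F (Fin.cons p.1 p.2) ∂ Rho = ∫ w, F w ∂P1 := by
        intro F
        rw [← hmp.map_eq, integral_map_equiv]
        apply integral_congr_ae
        filter_upwards with w
        congr 1
        exact Fin.cons_self_tail w
      -- boxes
      have hbox0 : ∀ᵐ x ∂ν, x ∈ Set.Icc (a 0) (a 0 + b) := hbox 0
      have hboxP : ∀ᵐ y ∂P2, ∀ j, y j ∈ Set.Icc (a j.succ) (a j.succ + b) := by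
        have hm1 : P2 (Set.pi Set.univ fun j => Set.Icc (a j.succ) (a j.succ + b)) = 1 := by
          rw [hP2, Measure.pi_pi]
          have : ∀ j : Fin n, μ' j (Set.Icc (a j.succ) (a j.succ + b)) = 1 := fun j =>
            bst_measure_one_of_ae measurableSet_Icc (hbox j.succ)
          simp [this]
        have := bst_ae_mem_of_measure_one
          (MeasurableSet.univ_pi fun j => measurableSet_Icc) hm1
        filter_upwards [this] with y hy
        intro j
        exact hy j (Set.mem_univ j)
      have hboxR : ∀ᵐ p ∂ Rho, p.1 ∈ Set.Icc (a 0) (a 0 + b) ∧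
          ∀ j, p.2 j ∈ Set.Icc (a j.succ) (a j.succ + b) := by
        have hm1 : Rho ((Set.Icc (a 0) (a 0 + b)) ×ˢ
            (Set.pi Set.univ fun j => Set.Icc (a j.succ) (a j.succ + b))) = 1 := by
          rw [hRho, Measure.prod_prod]
          rw [bst_measure_one_of_ae measurableSet_Icc hbox0]
          rw [bst_measure_one_of_ae (MeasurableSet.univ_pi fun j => measurableSet_Icc)
            (by filter_upwards [hboxP] with y hy; exact fun j _ => hy j)]
          simp
        have := bst_ae_mem_of_measure_one
          (measurableSet_Icc.prod (MeasurableSet.univ_pi fun j => measurableSet_Icc)) hm1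
        filter_upwards [this] with p hp
        exact ⟨hp.1, fun j => hp.2 j (Set.mem_univ j)⟩
      -- cons box membership
      have hconsbox : ∀ (x : ℝ) (y : Fin n → ℝ), x ∈ Set.Icc (a 0) (a 0 + b) →
          (∀ j, y j ∈ Set.Icc (a j.succ) (a j.succ + b)) →
          ∀ j : Fin (n + 1), (Fin.cons x y : Fin (n+1) → ℝ) j ∈ Set.Icc (a j) (a j + b) := by
        intro x y hx hy j
        refine Fin.cases ?_ ?_ j
        · simpa using hx
        · intro i; simpa using hy i
      -- global bound for f on boxes
      set C : ℝ := |f a| + (n + 1) * b with hC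
      have hfbd : ∀ w : Fin (n + 1) → ℝ, (∀ j, w j ∈ Set.Icc (a j) (a j + b)) → |f w| ≤ C := by
        intro w hw
        have h1 : |f w - f a| ≤ ∑ j, |w j - a j| := hLip w a
        have h2 : ∑ j, |w j - a j| ≤ ∑ _j : Fin (n + 1), b := by
          apply Finset.sum_le_sum
          intro j _
          exact abs_le.mpr ⟨by linarith [(hw j).1], by linarith [(hw j).2]⟩
        have h3 : (∑ _j : Fin (n + 1), b) = (n + 1) * b := by
          rw [Finset.sum_const]
          simp [mul_comm]
        have : |f w| ≤ |f a| + |f w - f a| := by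
          calc |f w| = |f a + (f w - f a)| := by ring_nf
            _ ≤ |f a| + |f w - f a| := abs_add_le _ _
        rw [hC]; push_cast; linarith
      -- slices
      have hslice_meas : ∀ y : Fin n → ℝ, Measurable fun x : ℝ => f (Fin.cons x y) := by
        intro y
        exact hfmeas.comp (hconsmeas.comp (measurable_id.prodMk measurable_const))
      have hsliceLip : ∀ (y : Fin n → ℝ) (x x' : ℝ),
          |f (Fin.cons x y) - f (Fin.cons x' y)| ≤ |x - x'| := by
        intro y x x'
        have := hLip (Fin.cons x y) (Fin.cons x' y)
        simpa [Fin.sum_univ_succ] using this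
      have hslice_int : ∀ y, Integrable (fun x => f (Fin.cons x y)) ν := fun y =>
        bst_int_of_bdd (hslice_meas y).aestronglyMeasurable
          (bst_lip_bdd ν hb.le hbox0 _ (hsliceLip y))
      -- the conditional mean g
      set g : (Fin n → ℝ) → ℝ := fun y => ∫ x, f (Fin.cons x y) ∂ν with hg
      have hgmeas : Measurable g := by
        have h1 : StronglyMeasurable fun p : ℝ × (Fin n → ℝ) => f (Fin.cons p.1 p.2) :=
          (hfmeas.comp hconsmeas).stronglyMeasurable
        exact h1.integral_prod_left'.measurable
      have hgLip : ∀ y y' : Fin n → ℝ, |g y - g y'| ≤ ∑ j, |y j - y' j| := by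
        intro y y'
        have hsub : g y - g y' = ∫ x, (f (Fin.cons x y) - f (Fin.cons x y')) ∂ν :=
          (integral_sub (hslice_int y) (hslice_int y')).symm
        rw [hsub]
        have hptw : ∀ x : ℝ, ‖f (Fin.cons x y) - f (Fin.cons x y')‖ ≤ ∑ j, |y j - y' j| := by
          intro x
          rw [Real.norm_eq_abs]
          have := hLip (Fin.cons x y) (Fin.cons x y')
          simpa [Fin.sum_univ_succ] using this
        have := norm_integral_le_of_norm_le_const (μ := ν)
          (C := ∑ j, |y j - y' j|) (Filter.Eventually.of_forall hptw)
        simpa [Real.norm_eq_abs] using this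
      set a' : Fin n → ℝ := fun j => a j.succ with ha'
      set Cg : ℝ := |g a'| + n * b with hCg
      have hgbd : ∀ᵐ y ∂P2, |g y| ≤ Cg := by
        filter_upwards [hboxP] with y hy
        have h1 : |g y - g a'| ≤ ∑ j, |y j - a' j| := hgLip y a'
        have h2 : ∑ j, |y j - a' j| ≤ ∑ _j : Fin n, b := by
          apply Finset.sum_le_sum
          intro j _
          exact abs_le.mpr ⟨by linarith [(hy j).1], by linarith [(hy j).2]⟩
        have h3 : (∑ _j : Fin n, b) = n * b := by rw [Finset.sum_const]; simp [mul_comm]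
        have h4 : |g y| ≤ |g a'| + |g y - g a'| := by
          calc |g y| = |g a' + (g y - g a')| := by ring_nf
            _ ≤ |g a'| + |g y - g a'| := abs_add_le _ _
        rw [hCg]; linarith
      set m : ℝ := ∫ w, f w ∂P1 with hm
      -- integrability of f over Rho
      have hfint : Integrable (fun p : ℝ × (Fin n → ℝ) => f (Fin.cons p.1 p.2)) Rho := by
        refine bst_int_of_bdd (hfmeas.comp hconsmeas).aestronglyMeasurable (C := C) ?_
        filter_upwards [hboxR] with p hp
        exact hfbd _ (hconsbox p.1 p.2 hp.1 hp.2)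
      have hgm : ∫ y, g y ∂P2 = m := by
        rw [hm, ← transport f, integral_prod_symm _ hfint]
      -- inner bound via the one-dimensional mgf lemma
      set D : ℝ := 2 * (1 - lam * b / 3) with hD
      set K0 : ℝ := Real.exp (lam ^ 2 * s 0 / D) with hK0
      have inner_le : ∀ y : Fin n → ℝ,
          ∫ x, Real.exp (lam * (f (Fin.cons x y) - g y)) ∂ν ≤ K0 := by
        intro y
        have hX2 : Integrable (fun x => (f (Fin.cons x y) - g y) ^ 2) ν := by
          refine bst_int_of_bdd
            ((((hslice_meas y).sub measurable_const).pow_const 2).aestronglyMeasurable)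
            (C := (|f (Fin.cons (a 0) y)| + b + |g y|) ^ 2) ?_
          filter_upwards [bst_lip_bdd ν hb.le hbox0 _ (hsliceLip y)] with x hx
          rw [abs_pow]
          refine pow_le_pow_left₀ (abs_nonneg _) ?_ 2
          calc |f (Fin.cons x y) - g y| ≤ |f (Fin.cons x y)| + |g y| := abs_sub _ _
            _ ≤ |f (Fin.cons (a 0) y)| + b + |g y| := by linarith
        have hub := bst_sub_mean_le ν hb.le hbox0 _ (hslice_meas y) (hsliceLip y)
        have hvar0 : ∫ x, (f (Fin.cons x y) - ∫ t, f (Fin.cons t y) ∂ν) ^ 2 ∂ν ≤ s 0 :=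
          (bst_var_lipschitz ν hb.le hbox0 _ (hslice_meas y) (hsliceLip y)).trans (hvars 0)
        exact bst_mgf ν (fun x => f (Fin.cons x y)) (hslice_int y) hX2 b hb hub (s 0) hvar0
          lam hlam hlb
      -- integrability of the exponential over Rho
      have hexpint : Integrable
          (fun p : ℝ × (Fin n → ℝ) => Real.exp (lam * (f (Fin.cons p.1 p.2) - m))) Rho := by
        refine bst_int_of_bdd
          ((Real.measurable_exp.comp (((hfmeas.comp hconsmeas).sub measurable_const).const_mul
            lam)).aestronglyMeasurable) (C := Real.exp (lam * (C + |m|))) ?_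
        filter_upwards [hboxR] with p hp
        have h1 : |f (Fin.cons p.1 p.2)| ≤ C := hfbd _ (hconsbox p.1 p.2 hp.1 hp.2)
        rw [abs_of_pos (Real.exp_pos _)]
        apply Real.exp_le_exp.mpr
        apply mul_le_mul_of_nonneg_left ?_ hlam
        have := le_abs_self (f (Fin.cons p.1 p.2))
        have := neg_abs_le m
        linarith
      have hgexpint : Integrable (fun y => Real.exp (lam * (g y - m))) P2 := by
        refine bst_int_of_bdd
          ((Real.measurable_exp.comp ((hgmeas.sub measurable_const).const_mul
            lam)).aestronglyMeasurable) (C := Real.exp (lam * (Cg + |m|))) ?_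
        filter_upwards [hgbd] with y hy
        rw [abs_of_pos (Real.exp_pos _)]
        apply Real.exp_le_exp.mpr
        apply mul_le_mul_of_nonneg_left ?_ hlam
        have := le_abs_self (g y)
        have := neg_abs_le m
        linarith
      -- main chain
      have hSfin : 0 ≤ K0 := (Real.exp_pos _).le
      calc ∫ w, Real.exp (lam * (f w - m)) ∂P1
          = ∫ p, Real.exp (lam * (f (Fin.cons p.1 p.2) - m)) ∂ Rho :=
            (transport fun w => Real.exp (lam * (f w - m))).symm
        _ = ∫ y, ∫ x, Real.exp (lam * (f (Fin.cons x y) - m)) ∂ν ∂P2 :=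
            integral_prod_symm _ hexpint
        _ = ∫ y, Real.exp (lam * (g y - m)) *
              ∫ x, Real.exp (lam * (f (Fin.cons x y) - g y)) ∂ν ∂P2 := by
            apply integral_congr_ae
            filter_upwards with y
            rw [← integral_const_mul]
            apply integral_congr_ae
            filter_upwards with x
            rw [← Real.exp_add]
            congr 1
            ring
        _ ≤ ∫ y, K0 * Real.exp (lam * (g y - m)) ∂P2 := by
            apply integral_mono_of_nonneg
            · filter_upwards with y
              exact mul_nonneg (Real.exp_pos _).le
                (integral_nonneg fun x => (Real.exp_pos _).le)
            · exact hgexpint.const_mul K0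
            · filter_upwards with y
              calc Real.exp (lam * (g y - m)) *
                    ∫ x, Real.exp (lam * (f (Fin.cons x y) - g y)) ∂ν
                  ≤ Real.exp (lam * (g y - m)) * K0 :=
                    mul_le_mul_of_nonneg_left (inner_le y) (Real.exp_pos _).le
                _ = K0 * Real.exp (lam * (g y - m)) := mul_comm _ _
        _ = K0 * ∫ y, Real.exp (lam * (g y - m)) ∂P2 := integral_const_mul K0 _
        _ ≤ K0 * Real.exp (lam ^ 2 * (∑ j : Fin n, s j.succ) / D) := by
            apply mul_le_mul_of_nonneg_left ?_ hSfin
            have := ih μ' (fun i => hprob i.succ) a' b hb (fun j => hbox j.succ)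
              (fun j => s j.succ) (fun j => hs0 j.succ) (fun j => hvars j.succ)
              g hgmeas hgLip lam hlam hlb
            rw [hgm] at this
            exact this
        _ = Real.exp (lam ^ 2 * (∑ j : Fin (n + 1), s j) / D) := by
            rw [hK0, ← Real.exp_add, Fin.sum_univ_succ]
            congr 1
            ring

lemma bst_joint_law {Ω : Type*} [MeasurableSpace Ω] (P : Measure Ω) [IsProbabilityMeasure P]
    (n : ℕ) (Z : Fin n → Ω → ℝ) (hZmeas : ∀ j, Measurable (Z j))
    (hindep : iIndepFun Z P) :
    Measure.map (fun ω j => Z j ω) P = Measure.pi (fun j => Measure.map (Z j) P) := by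
  haveI : ∀ j, IsProbabilityMeasure (Measure.map (Z j) P) := fun j =>
    Measure.isProbabilityMeasure_map (hZmeas j).aemeasurable
  refine (Measure.pi_eq fun s hs => ?_).symm
  rw [Measure.map_apply (measurable_pi_lambda _ fun j => hZmeas j) (MeasurableSet.univ_pi hs)]
  have hpre : (fun ω j => Z j ω) ⁻¹' (Set.pi Set.univ s) = ⋂ j ∈ Finset.univ, Z j ⁻¹' (s j) := by
    ext ω
    simp [Set.mem_univ_pi]
  rw [hpre, hindep.measure_inter_preimage_eq_mul Finset.univ (fun j _ => hs j)]
  exact Finset.prod_congr rfl fun j _ =>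
    (Measure.map_apply (hZmeas j) (hs j)).symm

lemma bst_degenerate {Ω : Type*} [MeasurableSpace Ω] (P : Measure Ω) [IsProbabilityMeasure P]
    (n : ℕ) (Z : Fin n → Ω → ℝ) (f : (Fin n → ℝ) → ℝ)
    (hLip : ∀ x y : Fin n → ℝ, |f x - f y| ≤ ∑ j, |x j - y j|)
    (c : Fin n → ℝ) (hc : ∀ j, ∀ᵐ ω ∂P, Z j ω = c j) (u : ℝ) (hu : 0 < u) :
    P {ω | u ≤ |f (fun j => Z j ω) - ∫ ω', f (fun j => Z j ω') ∂P|} = 0 := by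
  have hall : ∀ᵐ ω ∂P, ∀ j, Z j ω = c j := ae_all_iff.mpr hc
  have hfc : ∀ᵐ ω ∂P, f (fun j => Z j ω) = f c := by
    filter_upwards [hall] with ω hω
    have h1 := hLip (fun j => Z j ω) c
    have h2 : ∑ j, |Z j ω - c j| = 0 := by
      apply Finset.sum_eq_zero
      intro j _
      rw [hω j]
      simp
    rw [h2] at h1
    have := abs_nonneg (f (fun j => Z j ω) - f c)
    have : |f (fun j => Z j ω) - f c| = 0 := le_antisymm h1 this
    rwa [abs_eq_zero, sub_eq_zero] at this
  have hint : ∫ ω', f (fun j => Z j ω') ∂P = f c := by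
    rw [integral_congr_ae hfc, integral_const]
    simp
  refine measure_eq_zero_iff_ae_notMem.mpr ?_
  filter_upwards [hfc] with om hom
  simp only [Set.mem_setOf_eq, hom, hint, sub_self, abs_zero, not_le]
  exact hu

/-- Bernstein's inequality for 1-Lipschitz (w.r.t. the ℓ¹ norm) functions of independent
random variables with bounded range and bounded variances. -/
theorem stmt_6 {Ω : Type*} [MeasurableSpace Ω] (P : Measure Ω) [IsProbabilityMeasure P]
    (n : ℕ) (Z : Fin n → Ω → ℝ) (hZmeas : ∀ j, Measurable (Z j))
    (hindep : iIndepFun Z P)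
    (σ : Fin n → ℝ) (hvar : ∀ j, variance (Z j) P ≤ (σ j) ^ 2)
    (b : ℝ) (hrange : ∀ j, ∃ a : ℝ, ∀ᵐ ω ∂P, Z j ω ∈ Set.Icc a (a + b))
    (f : (Fin n → ℝ) → ℝ) (hfmeas : Measurable f)
    (hLip : ∀ x y : Fin n → ℝ, |f x - f y| ≤ ∑ j, |x j - y j|)
    (v : ℝ) (hv : v = ∑ j, (σ j) ^ 2) (u : ℝ) (hu : 0 < u) :
    (P {ω | u ≤ |f (fun j => Z j ω) - ∫ ω', f (fun j => Z j ω') ∂P|}).toReal ≤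
      2 * Real.exp (-(u ^ 2) / (2 * v + 2 / 3 * b * u)) := by
  have hRHSpos : (0:ℝ) ≤ 2 * Real.exp (-(u ^ 2) / (2 * v + 2 / 3 * b * u)) := by positivity
  choose a ha using hrange
  have hv0 : 0 ≤ v := by
    rw [hv]; exact Finset.sum_nonneg fun j _ => sq_nonneg _
  have hZvec : Measurable (fun ω j => Z j ω) := measurable_pi_lambda _ fun j => hZmeas j
  have hZbd : ∀ j, ∀ᵐ ω ∂P, |Z j ω| ≤ |a j| + |b| := fun j => by
    filter_upwards [ha j] with ω hω
    exact bst_abs_le_box hω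
  have hZl2 : ∀ j, MemLp (Z j) 2 P := fun j =>
    MemLp.of_bound (hZmeas j).aestronglyMeasurable (|a j| + |b|)
      (by filter_upwards [hZbd j] with ω hω; simpa [Real.norm_eq_abs] using hω)
  have hvar_int : ∀ j, variance (Z j) P = ∫ ω, (Z j ω - ∫ ω', Z j ω' ∂P) ^ 2 ∂P := fun j => by
    rw [variance_eq_integral (hZmeas j).aemeasurable]
  by_cases hmain : 0 < b ∧ 0 < v
  · obtain ⟨hb, hvpos⟩ := hmain
    set μ : Fin n → Measure ℝ := fun j => Measure.map (Z j) P with hμ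
    haveI : ∀ j, IsProbabilityMeasure (μ j) := fun j =>
      Measure.isProbabilityMeasure_map (hZmeas j).aemeasurable
    have hlaw : Measure.map (fun ω j => Z j ω) P = Measure.pi μ :=
      bst_joint_law P n Z hZmeas hindep
    have hboxμ : ∀ j, ∀ᵐ x ∂(μ j), x ∈ Set.Icc (a j) (a j + b) := fun j =>
      (ae_map_iff (hZmeas j).aemeasurable measurableSet_Icc).mpr (ha j)
    have hμmean : ∀ j, ∫ t, t ∂(μ j) = ∫ ω, Z j ω ∂P := fun j =>
      integral_map (hZmeas j).aemeasurable aestronglyMeasurable_id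
    have hvarμ : ∀ j, ∫ x, (x - ∫ t, t ∂(μ j)) ^ 2 ∂(μ j) ≤ (σ j) ^ 2 := by
      intro j
      have hmeas2 : Measurable (fun x : ℝ => (x - ∫ ω, Z j ω ∂P) ^ 2) :=
        (measurable_id.sub measurable_const).pow_const 2
      have e : ∫ x, (x - ∫ ω, Z j ω ∂P) ^ 2 ∂(μ j)
          = ∫ ω, (Z j ω - ∫ ω', Z j ω' ∂P) ^ 2 ∂P :=
        integral_map (hZmeas j).aemeasurable hmeas2.aestronglyMeasurable
      rw [hμmean j, e, ← hvar_int j]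
      exact hvar j
    have htransport : ∀ F : (Fin n → ℝ) → ℝ, Measurable F →
        ∫ x, F x ∂(Measure.pi μ) = ∫ ω, F (fun j => Z j ω) ∂P := by
      intro F hF
      rw [← hlaw, integral_map hZvec.aemeasurable hF.aestronglyMeasurable]
    set w : ℝ := v + b * u / 3 with hw
    have hwpos : 0 < w := by rw [hw]; positivity
    set lam : ℝ := u / w with hlamdef
    have hlam : 0 ≤ lam := by positivity
    have hlb : lam * b < 3 := by
      rw [hlamdef, div_mul_eq_mul_div, div_lt_iff₀ hwpos]
      rw [hw]; nlinarith
    have hallbox : ∀ᵐ ω ∂P, ∀ j, Z j ω ∈ Set.Icc (a j) (a j + b) := ae_all_iff.mpr ha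
    have oneside : ∀ F : (Fin n → ℝ) → ℝ, Measurable F →
        (∀ x y : Fin n → ℝ, |F x - F y| ≤ ∑ j, |x j - y j|) →
        (P {ω | u ≤ F (fun j => Z j ω) - ∫ ω', F (fun j => Z j ω') ∂P}).toReal ≤
          Real.exp (-(u ^ 2) / (2 * v + 2 / 3 * b * u)) := by
      intro F hF hFLip
      set mF : ℝ := ∫ ω', F (fun j => Z j ω') ∂P with hmF
      have hmF' : ∫ x, F x ∂(Measure.pi μ) = mF := htransport F hF
      have htensor := bst_tensor n μ (fun j => inferInstance) a b hb hboxμ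
        (fun j => (σ j) ^ 2) (fun j => sq_nonneg _) hvarμ F hF hFLip lam hlam hlb
      rw [hmF', ← hv] at htensor
      set CF : ℝ := |F a| + n * b with hCF
      have hFbd : ∀ x : Fin n → ℝ, (∀ j, x j ∈ Set.Icc (a j) (a j + b)) → |F x| ≤ CF := by
        intro x hx
        have h1 : |F x - F a| ≤ ∑ j, |x j - a j| := hFLip x a
        have h2 : ∑ j, |x j - a j| ≤ ∑ _j : Fin n, b := by
          apply Finset.sum_le_sum
          intro j _
          exact abs_le.mpr ⟨by linarith [(hx j).1], by linarith [(hx j).2]⟩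
        have h3 : (∑ _j : Fin n, b) = n * b := by rw [Finset.sum_const]; simp [mul_comm]
        have h4 : |F x| ≤ |F a| + |F x - F a| := by
          calc |F x| = |F a + (F x - F a)| := by ring_nf
            _ ≤ |F a| + |F x - F a| := abs_add_le _ _
        rw [hCF]; linarith
      have hT : ∫ ω, Real.exp (lam * (F (fun j => Z j ω) - mF)) ∂P ≤
          Real.exp (lam ^ 2 * v / (2 * (1 - lam * b / 3))) := by
        rw [← htransport (fun x => Real.exp (lam * (F x - mF)))
          (Real.measurable_exp.comp ((hF.sub measurable_const).const_mul lam))]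
        exact htensor
      have hexpint : Integrable (fun ω => Real.exp (lam * (F (fun j => Z j ω) - mF))) P := by
        refine bst_int_of_bdd
          ((Real.measurable_exp.comp (((hF.comp hZvec).sub measurable_const).const_mul
            lam)).aestronglyMeasurable) (C := Real.exp (lam * (CF + |mF|))) ?_
        filter_upwards [hallbox] with ω hω
        rw [abs_of_pos (Real.exp_pos _)]
        apply Real.exp_le_exp.mpr
        apply mul_le_mul_of_nonneg_left ?_ hlam
        have h1 : |F (fun j => Z j ω)| ≤ CF := hFbd _ hω
        have h2 := le_abs_self (F (fun j => Z j ω))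
        have h3 := neg_abs_le mF
        linarith
      set S : Set Ω := {ω | u ≤ F (fun j => Z j ω) - mF} with hS
      have hSmeas : MeasurableSet S :=
        measurableSet_le measurable_const ((hF.comp hZvec).sub measurable_const)
      have hindic : ∫ ω, S.indicator (fun _ => Real.exp (lam * u)) ω ∂P ≤
          ∫ ω, Real.exp (lam * (F (fun j => Z j ω) - mF)) ∂P := by
        apply integral_mono_of_nonneg
        · filter_upwards with ω
          exact Set.indicator_nonneg (fun _ _ => (Real.exp_pos _).le) ω
        · exact hexpint
        · filter_upwards with ω
          by_cases hωS : ω ∈ S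
          · rw [Set.indicator_of_mem hωS]
            apply Real.exp_le_exp.mpr
            exact mul_le_mul_of_nonneg_left hωS hlam
          · rw [Set.indicator_of_notMem hωS]
            exact (Real.exp_pos _).le
      rw [integral_indicator_const _ hSmeas] at hindic
      have hkey : (P S).toReal * Real.exp (lam * u) ≤
          Real.exp (lam ^ 2 * v / (2 * (1 - lam * b / 3))) := by
        calc (P S).toReal * Real.exp (lam * u)
            = (P S).toReal • Real.exp (lam * u) := by rw [smul_eq_mul]
          _ ≤ ∫ ω, Real.exp (lam * (F (fun j => Z j ω) - mF)) ∂P := hindic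
          _ ≤ _ := hT
      have hexp_eq : Real.exp (lam ^ 2 * v / (2 * (1 - lam * b / 3))) *
          Real.exp (-(lam * u)) = Real.exp (-(u ^ 2) / (2 * v + 2 / 3 * b * u)) := by
        rw [← Real.exp_add]
        congr 1
        have hwne : w ≠ 0 := ne_of_gt hwpos
        have h1 : 1 - lam * b / 3 = v / w := by
          rw [hlamdef]
          field_simp
          rw [hw]
          ring
        rw [h1, hlamdef]
        have h2 : (2 * v + 2 / 3 * b * u) = 2 * w := by rw [hw]; ring
        rw [h2]
        field_simp
        ring
      calc (P S).toReal
          = (P S).toReal * Real.exp (lam * u) * Real.exp (-(lam * u)) := by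
            rw [mul_assoc, ← Real.exp_add]; simp
        _ ≤ Real.exp (lam ^ 2 * v / (2 * (1 - lam * b / 3))) * Real.exp (-(lam * u)) := by
            apply mul_le_mul_of_nonneg_right hkey (Real.exp_pos _).le
        _ = Real.exp (-(u ^ 2) / (2 * v + 2 / 3 * b * u)) := hexp_eq
    set m : ℝ := ∫ ω', f (fun j => Z j ω') ∂P with hm
    have hside1 := oneside f hfmeas hLip
    have hnegLip : ∀ x y : Fin n → ℝ, |(-f x) - (-f y)| ≤ ∑ j, |x j - y j| := by
      intro x y
      have hne : (-f x) - (-f y) = f y - f x := by ring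
      calc |(-f x) - (-f y)| = |f y - f x| := by rw [hne]
        _ ≤ ∑ j, |y j - x j| := hLip y x
        _ = ∑ j, |x j - y j| := by
            apply Finset.sum_congr rfl
            intro j _
            exact abs_sub_comm _ _
    have hside2 := oneside (fun x => -f x) hfmeas.neg hnegLip
    have hnegmean : ∫ ω', -f (fun j => Z j ω') ∂P = -m := by
      rw [hm, ← integral_neg]
    rw [hnegmean] at hside2
    set S1 : Set Ω := {ω | u ≤ f (fun j => Z j ω) - m} with hS1
    set S2 : Set Ω := {ω | u ≤ -f (fun j => Z j ω) - -m} with hS2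
    have hsub : {ω | u ≤ |f (fun j => Z j ω) - m|} ⊆ S1 ∪ S2 := by
      intro ω hω
      simp only [Set.mem_setOf_eq] at hω
      rcases le_abs.mp hω with h | h
      · exact Or.inl h
      · right
        simp only [hS2, Set.mem_setOf_eq]
        linarith
    calc (P {ω | u ≤ |f (fun j => Z j ω) - m|}).toReal
        ≤ (P (S1 ∪ S2)).toReal := by
          apply ENNReal.toReal_mono (measure_ne_top _ _)
          exact measure_mono hsub
      _ ≤ ((P S1) + (P S2)).toReal := by
          apply ENNReal.toReal_mono
          · exact ENNReal.add_ne_top.mpr ⟨measure_ne_top _ _, measure_ne_top _ _⟩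
          · exact measure_union_le _ _
      _ = (P S1).toReal + (P S2).toReal :=
          ENNReal.toReal_add (measure_ne_top _ _) (measure_ne_top _ _)
      _ ≤ Real.exp (-(u ^ 2) / (2 * v + 2 / 3 * b * u)) +
          Real.exp (-(u ^ 2) / (2 * v + 2 / 3 * b * u)) := add_le_add hside1 hside2
      _ = 2 * Real.exp (-(u ^ 2) / (2 * v + 2 / 3 * b * u)) := by ring
  · rcases Nat.eq_zero_or_pos n with hn | hn
    · subst hn
      rw [bst_degenerate P 0 Z f hLip (fun j => j.elim0) (fun j => j.elim0) u hu]
      simpa using hRHSpos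
    · have hb0 : 0 ≤ b := by
        by_contra hneg
        push_neg at hneg
        have j0 : Fin n := ⟨0, hn⟩
        have hfalse : ∀ᵐ ω ∂P, False := by
          filter_upwards [ha j0] with ω hω
          rcases hω with ⟨h1, h2⟩
          linarith
        have h0 : P Set.univ = 0 := by
          refine measure_eq_zero_iff_ae_notMem.mpr ?_
          filter_upwards [hfalse] with ω hω
          exact absurd trivial (fun _ => hω)
        rw [measure_univ] at h0
        exact one_ne_zero h0
      have hconst : ∀ j, ∃ cj : ℝ, ∀ᵐ ω ∂P, Z j ω = cj := by
        intro j
        rcases (not_and_or.mp hmain) with hbneg | hvneg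
        · push_neg at hbneg
          have hb00 : b = 0 := le_antisymm hbneg hb0
          refine ⟨a j, ?_⟩
          filter_upwards [ha j] with ω hω
          rcases hω with ⟨h1, h2⟩
          rw [hb00] at h2
          linarith
        · push_neg at hvneg
          have hveq : v = 0 := le_antisymm hvneg hv0
          have hsq : (σ j) ^ 2 = 0 := by
            have h5 := Finset.sum_eq_zero_iff_of_nonneg
              (fun i (_ : i ∈ Finset.univ) => sq_nonneg (σ i))
            rw [← hv, hveq] at h5
            exact (h5.mp rfl) j (Finset.mem_univ j)
          have hvz : ∫ ω, (Z j ω - ∫ ω', Z j ω' ∂P) ^ 2 ∂P = 0 := by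
            have h1 := hvar j
            rw [hvar_int j, hsq] at h1
            have h2 : 0 ≤ ∫ ω, (Z j ω - ∫ ω', Z j ω' ∂P) ^ 2 ∂P :=
              integral_nonneg fun ω => sq_nonneg _
            linarith
          refine ⟨∫ ω', Z j ω' ∂P, ?_⟩
          have hint2 : Integrable (fun ω => (Z j ω - ∫ ω', Z j ω' ∂P) ^ 2) P := by
            refine bst_int_of_bdd
              (((hZmeas j).sub measurable_const).pow_const 2).aestronglyMeasurable
              (C := (|a j| + |b| + |∫ ω', Z j ω' ∂P|) ^ 2) ?_
            filter_upwards [hZbd j] with ω hω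
            rw [abs_pow]
            refine pow_le_pow_left₀ (abs_nonneg _) ?_ 2
            calc |Z j ω - ∫ ω', Z j ω' ∂P| ≤ |Z j ω| + |∫ ω', Z j ω' ∂P| := abs_sub _ _
              _ ≤ |a j| + |b| + |∫ ω', Z j ω' ∂P| := by linarith
          have h6 := (integral_eq_zero_iff_of_nonneg (fun ω => sq_nonneg _) hint2).mp hvz
          filter_upwards [h6] with ω hω
          have h7 : (Z j ω - ∫ ω', Z j ω' ∂P) ^ 2 = 0 := hω
          have h8 := pow_eq_zero_iff (n := 2) (by norm_num) |>.mp h7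
          linarith [sub_eq_zero.mp h8]
      choose c hc using hconst
      rw [bst_degenerate P n Z f hLip c hc u hu]
      simpa using hRHSpos
end
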